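/- Dynamic regret for S-I: Let E be a real normed vector space, φ: [0,∞) → [0,+∞] convex with φ(0) = 0, and ψ: E → ℝ ∪ {+∞} proper and φ-convex. Fix T ≥ 1, a ∈ E, a^ψ ∈ ∂ψ(a), positive reals η_1,…,η_{T+1} and θ_1,…,θ_T, and vectors x̂_1*,…,x̂_T* ∈ E*. Suppose that for each t = 1,…,T+1 we set x̌_t^ψ = a^ψ − η_t Σ_{i=1}^{t−1} θ_i x_i*, and for t = 1,…,T there are points x̃_t, x_t ∈ E and x̃_t^ψ ∈ E* with: x̌_t^ψ ∈ ∂ψ(x̃_t), x̃_t^ψ ∈ ∂ψ(x̃_t), and x̃_t^ψ − η_t θ_t x̂_t* ∈ ∂ψ(x_t); suppose f_t: E → ℝ ∪ {+∞} satisfies x_t* ∈ ∂f_t(x_t); and suppose there exists X_{t+1} ∈ E with (1/η_{t+1})(x̌_{t+1}^ψ − a^ψ) ∈ ∂ψ̃_t(X_{t+1}), where ψ̃_t(x) = (1/η_t)(ψ(x) − ⟨a^ψ, x⟩). Then for all z_1,…,z_T ∈ dom ψ with f_t(z_t) < +∞: Σ_{t=1}^T (f_t(x_t) − f_t(z_t))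 ≤ Σ_{t=1}^T (1/(η_tθ_t))[B_ψ(z_t, x̌_t^ψ) − B_ψ(z_t, a^ψ + (η_t/η_{t+1})(x̌_{t+1}^ψ − a^ψ))] + Σ_{t=1}^T (1/(η_tθ_t))[B_ψ(X_{t+1}, x̃_t^ψ) − B_ψ(X_{t+1}, x̌_t^ψ)] + Σ_{t=1}^T (1/(η_tθ_t)) φ*(η_tθ_t‖x_t* − x̂_t*‖) − Σ_{t=1}^T (1/(η_tθ_t)) B_ψ(x_t, x̃_t^ψ). -/

import Mathlib

open Finset

/-- Fenchel conjugate of an extended-real-valued function on a normed space. -/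
noncomputable def fconj {E : Type*} [NormedAddCommGroup E] [NormedSpace ℝ E]
    (g : E → EReal) (p : E →L[ℝ] ℝ) : EReal :=
  ⨆ x : E, ((p x : ℝ) : EReal) - g x

/-- Generalized Bregman divergence `B_g(x, y*) = g(x) + g*(y*) − ⟨y*, x⟩`. -/
noncomputable def breg {E : Type*} [NormedAddCommGroup E] [NormedSpace ℝ E]
    (g : E → EReal) (x : E) (p : E →L[ℝ] ℝ) : EReal :=
  g x + fconj g p - ((p x : ℝ) : EReal)

/-- Subdifferential: `∂g(x) = {x* : B_g(x, x*) = 0}`. -/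
def subdiff {E : Type*} [NormedAddCommGroup E] [NormedSpace ℝ E]
    (g : E → EReal) (x : E) : Set (E →L[ℝ] ℝ) :=
  {p | breg g x p = 0}

/-- Conjugate of `Φ : [0,∞) → [0,+∞]` : `Φ*(s) = sup_{r ≥ 0} (s·r − Φ(r))`. -/
noncomputable def phiConj (Φ : ℝ → EReal) (s : ℝ) : EReal :=
  ⨆ r : {r : ℝ // 0 ≤ r}, ((s * r.1 : ℝ) : EReal) - Φ r.1


private lemma ereal_add_eq_coe {a b : EReal} {r : ℝ} (h : a + b = (r : EReal)) :
    ∃ p q : ℝ, a = (p : EReal) ∧ b = (q : EReal) ∧ p + q = r := by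
  induction a using EReal.rec <;> induction b using EReal.rec <;>
    simp_all [← EReal.coe_add, EReal.bot_add, EReal.add_bot, EReal.top_add_coe,
      EReal.coe_add_top, EReal.top_add_top, EReal.coe_eq_coe_iff]

private lemma ereal_sub_coe_eq_zero {a : EReal} {r : ℝ} (h : a - (r : EReal) = 0) :
    a = (r : EReal) := by
  induction a using EReal.rec <;>
    simp_all [← EReal.coe_sub, EReal.top_sub_coe, sub_eq_zero]

private lemma subdiff_finite {E : Type*} [NormedAddCommGroup E] [NormedSpace ℝ E]
    {g : E → EReal} {x : E} {p : E →L[ℝ] ℝ} (h : p ∈ subdiff g x) :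
    ∃ gx c : ℝ, g x = (gx : EReal) ∧ fconj g p = (c : EReal) ∧ gx + c = p x := by
  have h' : breg g x p = 0 := h
  unfold breg at h'
  have := ereal_sub_coe_eq_zero h'
  exact ereal_add_eq_coe this

section
variable {E : Type*} [NormedAddCommGroup E] [NormedSpace ℝ E]

private lemma fconj_ge (g : E → EReal) (p : E →L[ℝ] ℝ) (y : E) :
    ((p y : ℝ) : EReal) - g y ≤ fconj g p :=
  le_iSup (fun x => ((p x : ℝ) : EReal) - g x) y

private lemma ne_bot_of_fconj_coe {g : E → EReal} {p : E →L[ℝ] ℝ} {c : ℝ}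
    (h : fconj g p = (c : EReal)) (y : E) : g y ≠ ⊥ := by
  intro hy
  have := fconj_ge g p y
  rw [h, hy, EReal.coe_sub_bot] at this
  exact (EReal.coe_ne_top c) (top_le_iff.1 this)

private lemma subgrad_real {g : E → EReal} {p : E →L[ℝ] ℝ} {c gy : ℝ} {y : E}
    (h : fconj g p = (c : EReal)) (hy : g y = (gy : EReal)) : p y - gy ≤ c := by
  have := fconj_ge g p y
  rw [h, hy, ← EReal.coe_sub, EReal.coe_le_coe_iff] at this
  exact this

private lemma fconj_eq_of_bounds {g : E → EReal} {q : E →L[ℝ] ℝ} {c : ℝ} {x : E}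
    (hub : ∀ y, ((q y : ℝ) : EReal) - g y ≤ (c : EReal))
    (hx : g x = ((q x - c : ℝ) : EReal)) : fconj g q = (c : EReal) := by
  refine le_antisymm (iSup_le hub) ?_
  have := fconj_ge g q x
  rw [hx, ← EReal.coe_sub] at this
  simpa using this

private lemma coe_finset_sum {α : Type*} (s : Finset α) (f : α → ℝ) :
    ((∑ i ∈ s, f i : ℝ) : EReal) = ∑ i ∈ s, ((f i : ℝ) : EReal) :=
  map_sum (⟨⟨Real.toEReal, EReal.coe_zero⟩, EReal.coe_add⟩ : ℝ →+ EReal) f s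

private lemma ereal_exists_of_le_coe {v : EReal} {K : ℝ} (h0 : 0 ≤ v) (hK : v ≤ (K : EReal)) :
    ∃ w : ℝ, v = (w : EReal) ∧ 0 ≤ w ∧ w ≤ K := by
  induction v using EReal.rec with
  | bot => exact absurd h0 (by simp)
  | coe w => exact ⟨w, rfl, by exact_mod_cast h0, by exact_mod_cast hK⟩
  | top => exact absurd hK (by simp)
end

private lemma ereal_real_of {v : EReal} (h1 : v ≠ ⊥) (h2 : v < ⊤) : ∃ w : ℝ, v = (w : EReal) := by
  induction v using EReal.rec with
  | bot => exact absurd rfl h1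
  | coe w => exact ⟨w, rfl⟩
  | top => exact absurd h2 (lt_irrefl _)

private lemma real_of_scaled {k w u : ℝ} (hk : 0 < k) {A : EReal} (hA : A ≠ ⊥)
    (h : (k : EReal) * (A - (w : EReal)) = (u : EReal)) :
    ∃ D : ℝ, A = (D : EReal) ∧ k * (D - w) = u := by
  induction A using EReal.rec with
  | bot => exact absurd rfl hA
  | coe D =>
    refine ⟨D, rfl, ?_⟩
    rw [← EReal.coe_sub, ← EReal.coe_mul, EReal.coe_eq_coe_iff] at h
    exact h
  | top =>
    rw [EReal.top_sub_coe, EReal.coe_mul_top_of_pos hk] at h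
    exact absurd h.symm (EReal.coe_ne_top u)

section
variable {E : Type*} [NormedAddCommGroup E] [NormedSpace ℝ E]

private lemma breg_coe {ψ : E → EReal} {x : E} {p : E →L[ℝ] ℝ} {gx c : ℝ}
    (h1 : ψ x = (gx : EReal)) (h2 : fconj ψ p = (c : EReal)) :
    breg ψ x p = ((gx + c - p x : ℝ) : EReal) := by
  unfold breg
  rw [h1, h2, ← EReal.coe_add, ← EReal.coe_sub]

private lemma per_step
    (Φ : ℝ → EReal) (hΦnn : ∀ s : ℝ, 0 ≤ s → 0 ≤ Φ s)
    (ψ : E → EReal) (hbot : ∀ x, ψ x ≠ ⊥)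
    (hψ : ∀ (x y : E) (p : E →L[ℝ] ℝ), p ∈ subdiff ψ y → Φ ‖x - y‖ ≤ breg ψ x p)
    (η η' θ : ℝ) (hη : 0 < η) (hη' : 0 < η') (hθ : 0 < θ)
    (apsi xhat xstar xcheck xcheck' : E →L[ℝ] ℝ)
    (xtil xt X' : E) (xtilpsi : E →L[ℝ] ℝ)
    (hq : apsi + (η / η') • (xcheck' - apsi) = xcheck - (η * θ) • xstar)
    (hxtil₁ : xcheck ∈ subdiff ψ xtil)
    (hxtil₂ : xtilpsi ∈ subdiff ψ xtil)
    (hxt : xtilpsi - (η * θ) • xhat ∈ subdiff ψ xt)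
    (f : E → EReal) (hf : xstar ∈ subdiff f xt)
    (hX : (1 / η') • (xcheck' - apsi) ∈
        subdiff (fun x => ((1 / η : ℝ) : EReal) * (ψ x - ((apsi x : ℝ) : EReal))) X')
    (zt : E) (hz1 : ψ zt < ⊤) (hz2 : f zt < ⊤) :
    ∃ a b1 b2 b3 b4 : ℝ,
      f xt - f zt = (a : EReal) ∧
      breg ψ zt xcheck - breg ψ zt (apsi + (η / η') • (xcheck' - apsi)) = (b1 : EReal) ∧
      breg ψ X' xtilpsi - breg ψ X' xcheck = (b2 : EReal) ∧
      (b3 : EReal) ≤ phiConj Φ (η * θ * ‖xstar - xhat‖) ∧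
      breg ψ xt xtilpsi = (b4 : EReal) ∧
      a ≤ (1 / (η * θ)) * (b1 + b2 + b3 - b4) := by
  have hc : 0 < η * θ := mul_pos hη hθ
  obtain ⟨A, B1, hA, hB1, hAB1⟩ := subdiff_finite hxtil₁
  obtain ⟨A2, B2, hA2, hB2, hAB2⟩ := subdiff_finite hxtil₂
  have hAA : A2 = A := by rw [hA] at hA2; exact_mod_cast hA2.symm
  subst hAA
  obtain ⟨C, B3, hC, hB3, hCB3⟩ := subdiff_finite hxt
  obtain ⟨F, G, hF, hG, hFG⟩ := subdiff_finite hf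
  obtain ⟨Fz, hFz⟩ := ereal_real_of (ne_bot_of_fconj_coe hG zt) hz2
  obtain ⟨Z, hZ⟩ := ereal_real_of (hbot zt) hz1
  obtain ⟨u, v, hu, hv, huv⟩ := subdiff_finite hX
  beta_reduce at hu
  obtain ⟨D, hD, hDu⟩ := real_of_scaled (by positivity : (0:ℝ) < 1/η) (hbot X') hu
  set ptil := (1 / η') • (xcheck' - apsi) with hptil
  set q := apsi + (η / η') • (xcheck' - apsi) with hqdef
  have hqp : ∀ y : E, q y = apsi y + η * ptil y := by
    intro y
    simp only [hqdef, hptil, ContinuousLinearMap.add_apply, ContinuousLinearMap.smul_apply,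
      ContinuousLinearMap.sub_apply, smul_eq_mul]
    field_simp
  -- upper bound for fconj ψ q
  have hub : ∀ y, ((q y : ℝ) : EReal) - ψ y ≤ ((q X' - D : ℝ) : EReal) := by
    intro y
    rcases eq_top_or_lt_top (ψ y) with hy | hy
    · rw [hy, EReal.sub_top]; exact bot_le
    · obtain ⟨w, hw⟩ := ereal_real_of (hbot y) hy
      rw [hw, ← EReal.coe_sub, EReal.coe_le_coe_iff]
      have hψy : (fun x => ((1/η:ℝ):EReal) * (ψ x - ((apsi x:ℝ):EReal))) y
          = (((1/η) * (w - apsi y) : ℝ) : EReal) := by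
        simp only [hw, ← EReal.coe_sub, ← EReal.coe_mul]
      have hreal := subgrad_real hv hψy
      have hmul := mul_le_mul_of_nonneg_left hreal hη.le
      have hexp : η * (ptil y - 1 / η * (w - apsi y)) = η * ptil y - (w - apsi y) := by
        field_simp
      rw [hexp] at hmul
      have hDu2 : η * u = D - apsi X' := by rw [← hDu]; field_simp
      have huv2 : η * u + η * v = η * ptil X' := by rw [← huv]; ring
      rw [hqp y, hqp X']
      linarith
  have hB4 : fconj ψ q = ((q X' - D : ℝ) : EReal) := by
    refine fconj_eq_of_bounds (x := X') hub ?_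
    rw [hD]; norm_num
  -- Φ bound
  have hΦle := hψ X' xt _ hxt
  rw [breg_coe hD hB3] at hΦle
  obtain ⟨Φr, hΦr, hΦr0, hΦrK⟩ := ereal_exists_of_le_coe (hΦnn _ (norm_nonneg _)) hΦle
  -- b3 bound
  have hb3 : (((η * θ * ‖xstar - xhat‖) * ‖X' - xt‖ - Φr : ℝ) : EReal) ≤
      phiConj Φ (η * θ * ‖xstar - xhat‖) := by
    have h := le_iSup (fun rr : {r : ℝ // 0 ≤ r} =>
      (((η * θ * ‖xstar - xhat‖) * rr.1 : ℝ) : EReal) - Φ rr.1) ⟨‖X' - xt‖, norm_nonneg _⟩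
    simp only [hΦr, ← EReal.coe_sub] at h
    exact h
  -- applications as reals
  have hqz : q zt = xcheck zt - (η * θ) * xstar zt := by
    rw [hq]; simp [ContinuousLinearMap.sub_apply, ContinuousLinearMap.smul_apply]
  have hqX' : q X' = xcheck X' - (η * θ) * xstar X' := by
    rw [hq]; simp [ContinuousLinearMap.sub_apply, ContinuousLinearMap.smul_apply]
  have hp3t : (xtilpsi - (η * θ) • xhat) xt = xtilpsi xt - (η * θ) * xhat xt := by
    simp [ContinuousLinearMap.sub_apply, ContinuousLinearMap.smul_apply]
  have hp3X : (xtilpsi - (η * θ) • xhat) X' = xtilpsi X' - (η * θ) * xhat X' := by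
    simp [ContinuousLinearMap.sub_apply, ContinuousLinearMap.smul_apply]
  have hpair : xstar xt - xhat xt - (xstar X' - xhat X') ≤ ‖xstar - xhat‖ * ‖X' - xt‖ := by
    have h1 := (xstar - xhat).le_opNorm (xt - X')
    have h2 : ‖xt - X'‖ = ‖X' - xt‖ := norm_sub_rev _ _
    have h3 : (xstar - xhat) (xt - X') ≤ ‖(xstar - xhat) (xt - X')‖ := by
      rw [Real.norm_eq_abs]; exact le_abs_self _
    have h4 : (xstar - xhat) (xt - X') = xstar xt - xhat xt - (xstar X' - xhat X') := by
      simp [ContinuousLinearMap.sub_apply, map_sub]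
    rw [h2] at h1
    linarith [h3, h1, h4]
  have hGz : xstar zt - Fz ≤ G := subgrad_real hG hFz
  refine ⟨F - Fz, (Z + B1 - xcheck zt) - (Z + (q X' - D) - q zt),
    (D + B2 - xtilpsi X') - (D + B1 - xcheck X'),
    (η * θ * ‖xstar - xhat‖) * ‖X' - xt‖ - Φr, C + B2 - xtilpsi xt, ?_, ?_, ?_, hb3, ?_, ?_⟩
  · rw [hF, hFz, ← EReal.coe_sub]
  · rw [breg_coe hZ hB1, breg_coe hZ hB4, ← EReal.coe_sub]
  · rw [breg_coe hD hB2, breg_coe hD hB1, ← EReal.coe_sub]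
  · exact breg_coe hC hB2
  · rw [one_div, inv_mul_eq_div, le_div_iff₀ hc]
    have key1 : F - Fz ≤ xstar xt - xstar zt := by linarith
    have m1 := mul_le_mul_of_nonneg_left key1 hc.le
    have m2 := mul_le_mul_of_nonneg_left hpair hc.le
    rw [hp3t] at hCB3
    rw [hp3X] at hΦrK
    linarith [m1, m2, hqz, hqX', hCB3, hΦrK, hΦr0]
end


/-- **Dynamic regret for the strategy S-I.** -/
theorem dynamic_regret_S_I
    {E : Type*} [NormedAddCommGroup E] [NormedSpace ℝ E]
    (Φ : ℝ → EReal)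
    (hΦconv : ∀ a b s t : ℝ, 0 ≤ a → 0 ≤ b → a + b = 1 → 0 ≤ s → 0 ≤ t →
      Φ (a * s + b * t) ≤ (a : EReal) * Φ s + (b : EReal) * Φ t)
    (hΦ0 : Φ 0 = 0) (hΦnn : ∀ s : ℝ, 0 ≤ s → 0 ≤ Φ s)
    (ψ : E → EReal) (hbot : ∀ x, ψ x ≠ ⊥) (hproper : ∃ x, ψ x ≠ ⊤)
    (hψ : ∀ (x y : E) (p : E →L[ℝ] ℝ), p ∈ subdiff ψ y → Φ ‖x - y‖ ≤ breg ψ x p)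
    (T : ℕ) (hT : 1 ≤ T)
    (a : E) (apsi : E →L[ℝ] ℝ) (ha : apsi ∈ subdiff ψ a)
    (η θ : ℕ → ℝ)
    (hη : ∀ t ∈ Icc 1 (T + 1), 0 < η t) (hθ : ∀ t ∈ Icc 1 T, 0 < θ t)
    (xhat xstar : ℕ → E →L[ℝ] ℝ)
    (xcheck : ℕ → E →L[ℝ] ℝ)
    (hxcheck : ∀ t ∈ Icc 1 (T + 1),
      xcheck t = apsi - η t • ∑ i ∈ Ico 1 t, θ i • xstar i)
    (xtil xt : ℕ → E) (xtilpsi : ℕ → E →L[ℝ] ℝ)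
    (hxtil₁ : ∀ t ∈ Icc 1 T, xcheck t ∈ subdiff ψ (xtil t))
    (hxtil₂ : ∀ t ∈ Icc 1 T, xtilpsi t ∈ subdiff ψ (xtil t))
    (hxt : ∀ t ∈ Icc 1 T, xtilpsi t - (η t * θ t) • xhat t ∈ subdiff ψ (xt t))
    (f : ℕ → E → EReal)
    (hf : ∀ t ∈ Icc 1 T, xstar t ∈ subdiff (f t) (xt t))
    (X : ℕ → E)
    (hX : ∀ t ∈ Icc 1 T,
      (1 / η (t + 1)) • (xcheck (t + 1) - apsi) ∈
        subdiff (fun x => ((1 / η t : ℝ) : EReal) * (ψ x - ((apsi x : ℝ) : EReal)))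
          (X (t + 1)))
    (z : ℕ → E)
    (hz : ∀ t ∈ Icc 1 T, ψ (z t) < ⊤ ∧ f t (z t) < ⊤) :
    ∑ t ∈ Icc 1 T, (f t (xt t) - f t (z t)) ≤
      (∑ t ∈ Icc 1 T, ((1 / (η t * θ t) : ℝ) : EReal) *
          (breg ψ (z t) (xcheck t) -
           breg ψ (z t) (apsi + (η t / η (t + 1)) • (xcheck (t + 1) - apsi))))
      + (∑ t ∈ Icc 1 T, ((1 / (η t * θ t) : ℝ) : EReal) *
          (breg ψ (X (t + 1)) (xtilpsi t) - breg ψ (X (t + 1)) (xcheck t)))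
      + (∑ t ∈ Icc 1 T, ((1 / (η t * θ t) : ℝ) : EReal) *
          phiConj Φ (η t * θ t * ‖xstar t - xhat t‖))
      - ∑ t ∈ Icc 1 T, ((1 / (η t * θ t) : ℝ) : EReal) *
          breg ψ (xt t) (xtilpsi t) := by
  have hmem : ∀ t ∈ Icc 1 T, t ∈ Icc 1 (T + 1) := fun t ht => by
    rw [mem_Icc] at *; omega
  have hmem' : ∀ t ∈ Icc 1 T, t + 1 ∈ Icc 1 (T + 1) := fun t ht => by
    rw [mem_Icc] at *; omega
  -- the algebraic identity for the averaged dual point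
  have hqid : ∀ t ∈ Icc 1 T,
      apsi + (η t / η (t + 1)) • (xcheck (t + 1) - apsi)
        = xcheck t - (η t * θ t) • xstar t := by
    intro t ht
    have ht1 : 1 ≤ t := (mem_Icc.1 ht).1
    have h1 := hxcheck t (hmem t ht)
    have h2 := hxcheck (t + 1) (hmem' t ht)
    have hs : ∑ i ∈ Ico 1 (t + 1), θ i • xstar i
        = (∑ i ∈ Ico 1 t, θ i • xstar i) + θ t • xstar t :=
      Finset.sum_Ico_succ_top ht1 _
    have hη2 : η (t + 1) ≠ 0 := (hη (t + 1) (hmem' t ht)).ne'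
    rw [h1, h2, hs]
    match_scalars <;> field_simp <;> ring
  -- per-step real data
  have key : ∀ t : ℕ, ∃ a' b1 b2 b3 b4 : ℝ, t ∈ Icc 1 T →
      (f t (xt t) - f t (z t) = (a' : EReal) ∧
       breg ψ (z t) (xcheck t)
         - breg ψ (z t) (apsi + (η t / η (t + 1)) • (xcheck (t + 1) - apsi)) = (b1 : EReal) ∧
       breg ψ (X (t + 1)) (xtilpsi t) - breg ψ (X (t + 1)) (xcheck t) = (b2 : EReal) ∧
       (b3 : EReal) ≤ phiConj Φ (η t * θ t * ‖xstar t - xhat t‖) ∧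
       breg ψ (xt t) (xtilpsi t) = (b4 : EReal) ∧
       a' ≤ (1 / (η t * θ t)) * (b1 + b2 + b3 - b4)) := by
    intro t
    by_cases ht : t ∈ Icc 1 T
    · obtain ⟨a', b1, b2, b3, b4, h1, h2, h3, h4, h5, h6⟩ :=
        per_step Φ hΦnn ψ hbot hψ (η t) (η (t + 1)) (θ t)
          (hη t (hmem t ht)) (hη (t + 1) (hmem' t ht)) (hθ t ht)
          apsi (xhat t) (xstar t) (xcheck t) (xcheck (t + 1))
          (xtil t) (xt t) (X (t + 1)) (xtilpsi t)
          (hqid t ht) (hxtil₁ t ht) (hxtil₂ t ht) (hxt t ht) (f t) (hf t ht)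
          (hX t ht) (z t) (hz t ht).1 (hz t ht).2
      exact ⟨a', b1, b2, b3, b4, fun _ => ⟨h1, h2, h3, h4, h5, h6⟩⟩
    · exact ⟨0, 0, 0, 0, 0, fun h => absurd h ht⟩
  choose A B1 B2 B3 B4 hkey using key
  have e0 : ∑ t ∈ Icc 1 T, (f t (xt t) - f t (z t))
      = ((∑ t ∈ Icc 1 T, A t : ℝ) : EReal) := by
    rw [coe_finset_sum]
    exact Finset.sum_congr rfl fun t ht => (hkey t ht).1
  have e1 : ∑ t ∈ Icc 1 T, ((1 / (η t * θ t) : ℝ) : EReal) *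
        (breg ψ (z t) (xcheck t) -
         breg ψ (z t) (apsi + (η t / η (t + 1)) • (xcheck (t + 1) - apsi)))
      = ((∑ t ∈ Icc 1 T, (1 / (η t * θ t)) * B1 t : ℝ) : EReal) := by
    rw [coe_finset_sum]
    exact Finset.sum_congr rfl fun t ht => by
      rw [(hkey t ht).2.1, ← EReal.coe_mul]
  have e2 : ∑ t ∈ Icc 1 T, ((1 / (η t * θ t) : ℝ) : EReal) *
        (breg ψ (X (t + 1)) (xtilpsi t) - breg ψ (X (t + 1)) (xcheck t))
      = ((∑ t ∈ Icc 1 T, (1 / (η t * θ t)) * B2 t : ℝ) : EReal) := by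
    rw [coe_finset_sum]
    exact Finset.sum_congr rfl fun t ht => by
      rw [(hkey t ht).2.2.1, ← EReal.coe_mul]
  have e4 : ∑ t ∈ Icc 1 T, ((1 / (η t * θ t) : ℝ) : EReal) *
        breg ψ (xt t) (xtilpsi t)
      = ((∑ t ∈ Icc 1 T, (1 / (η t * θ t)) * B4 t : ℝ) : EReal) := by
    rw [coe_finset_sum]
    exact Finset.sum_congr rfl fun t ht => by
      rw [(hkey t ht).2.2.2.2.1, ← EReal.coe_mul]
  have e3 : ((∑ t ∈ Icc 1 T, (1 / (η t * θ t)) * B3 t : ℝ) : EReal)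
      ≤ ∑ t ∈ Icc 1 T, ((1 / (η t * θ t) : ℝ) : EReal) *
          phiConj Φ (η t * θ t * ‖xstar t - xhat t‖) := by
    rw [coe_finset_sum]
    refine Finset.sum_le_sum fun t ht => ?_
    rw [EReal.coe_mul]
    refine mul_le_mul_of_nonneg_left (hkey t ht).2.2.2.1 ?_
    have h1 : (0:ℝ) ≤ 1 / (η t * θ t) := by
      have h2 := hη t (hmem t ht); have h3 := hθ t ht; positivity
    exact_mod_cast h1
  rw [e0, e1, e2, e4]
  calc ((∑ t ∈ Icc 1 T, A t : ℝ) : EReal)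
      ≤ ((((∑ t ∈ Icc 1 T, (1 / (η t * θ t)) * B1 t)
          + (∑ t ∈ Icc 1 T, (1 / (η t * θ t)) * B2 t)
          + (∑ t ∈ Icc 1 T, (1 / (η t * θ t)) * B3 t)
          - (∑ t ∈ Icc 1 T, (1 / (η t * θ t)) * B4 t) : ℝ)) : EReal) := by
        rw [EReal.coe_le_coe_iff]
        have hsum : ∑ t ∈ Icc 1 T, A t
            ≤ ∑ t ∈ Icc 1 T, ((1 / (η t * θ t)) * B1 t + (1 / (η t * θ t)) * B2 t
              + (1 / (η t * θ t)) * B3 t - (1 / (η t * θ t)) * B4 t) := by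
          refine Finset.sum_le_sum fun t ht => ?_
          have := (hkey t ht).2.2.2.2.2
          linarith [this]
        rw [Finset.sum_sub_distrib, Finset.sum_add_distrib, Finset.sum_add_distrib] at hsum
        linarith [hsum]
    _ = ((∑ t ∈ Icc 1 T, (1 / (η t * θ t)) * B1 t : ℝ) : EReal)
          + ((∑ t ∈ Icc 1 T, (1 / (η t * θ t)) * B2 t : ℝ) : EReal)
          + ((∑ t ∈ Icc 1 T, (1 / (η t * θ t)) * B3 t : ℝ) : EReal)
          - ((∑ t ∈ Icc 1 T, (1 / (η t * θ t)) * B4 t : ℝ) : EReal) := by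
        rw [EReal.coe_sub, EReal.coe_add, EReal.coe_add]
    _ ≤ _ := by
        refine EReal.sub_le_sub ?_ le_rfl
        exact add_le_add_right e3 _
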